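/- Let c ∈ ℝ^d and let y_1, …, y_k ∈ ℝ^d be points with ‖y_i − c‖ ≤ 1 for all i. Then the closed 1-neighborhood of the convex hull of {y_1, …, y_k} is contained in the union of the closed balls B(y_i, √2); that is, every point y ∈ ℝ^d whose distance from conv{y_1, …, y_k} is at most 1 satisfies ‖y − y_i‖ ≤ √2 for some index i. -/

import Mathlib

open RealInnerProductSpace Finset in
theorem stmt5 (d k : ℕ) (hk : 0 < k) (c : EuclideanSpace ℝ (Fin d))
    (y : Fin k → EuclideanSpace ℝ (Fin d))
    (hy : ∀ i, ‖y i - c‖ ≤ 1)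
    (z : EuclideanSpace ℝ (Fin d))
    (hz : Metric.infDist z (convexHull ℝ (Set.range y)) ≤ 1) :
    ∃ i, ‖z - y i‖ ≤ Real.sqrt 2 := by
  haveI : Nonempty (Fin k) := ⟨⟨0, hk⟩⟩
  have hne : (convexHull ℝ (Set.range y)).Nonempty :=
    (Set.range_nonempty y).mono (subset_convexHull ℝ _) |>.imp (fun _ h => h) |>.elim
      (fun x hx => ⟨x, hx⟩)
  have hcpt : IsCompact (convexHull ℝ (Set.range y)) :=
    (Set.finite_range y).isCompact_convexHull (𝕜 := ℝ)
  obtain ⟨x, hxmem, hxd⟩ := hcpt.exists_infDist_eq_dist hne z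
  have hzx : ‖z - x‖ ≤ 1 := by
    rw [← dist_eq_norm]; rw [hxd] at hz; exact hz
  rw [convexHull_range_eq_exists_affineCombination] at hxmem
  obtain ⟨s, w, hw0, hw1, hxeq⟩ := hxmem
  set W : Fin k → ℝ := fun i => if i ∈ s then w i else 0 with hWdef
  have hW0 : ∀ i, 0 ≤ W i := by
    intro i; simp only [hWdef]; split
    · exact hw0 i ‹_›
    · exact le_refl 0
  have hWsum : ∑ i, W i = 1 := by
    rw [← hw1]
    rw [← Finset.sum_subset (Finset.subset_univ s)]
    · exact Finset.sum_congr rfl fun i hi => by simp [hWdef, hi]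
    · intro i _ hi; simp [hWdef, hi]
  have hx : x = ∑ i, W i • y i := by
    rw [← hxeq, affineCombination_eq_linear_combination s y w hw1]
    rw [← Finset.sum_subset (Finset.subset_univ s)]
    · exact Finset.sum_congr rfl fun i hi => by simp [hWdef, hi]
    · intro i _ hi; simp [hWdef, hi]
  -- inner products
  have hizx : (inner ℝ z x : ℝ) = ∑ i, W i * (inner ℝ z (y i) : ℝ) := by
    rw [hx, inner_sum]
    exact Finset.sum_congr rfl fun i _ => real_inner_smul_right _ _ _
  have hixc : (inner ℝ x c : ℝ) = ∑ i, W i * (inner ℝ (y i) c : ℝ) := by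
    rw [hx, sum_inner]
    exact Finset.sum_congr rfl fun i _ => real_inner_smul_left _ _ _
  have E1 : ∑ i, W i * ‖z - y i‖ ^ 2
      = ‖z‖ ^ 2 - 2 * (inner ℝ z x : ℝ) + ∑ i, W i * ‖y i‖ ^ 2 := by
    have h1 : ∀ i : Fin k, W i * ‖z - y i‖ ^ 2
        = W i * ‖z‖ ^ 2 - 2 * (W i * (inner ℝ z (y i) : ℝ)) + W i * ‖y i‖ ^ 2 := fun i => by
      rw [norm_sub_sq_real]; ring
    simp_rw [h1]
    rw [Finset.sum_add_distrib, Finset.sum_sub_distrib, ← Finset.sum_mul, hWsum, one_mul,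
      ← Finset.mul_sum, ← hizx]
  have E2 : ∑ i, W i * ‖y i - c‖ ^ 2
      = ∑ i, W i * ‖y i‖ ^ 2 - 2 * (inner ℝ x c : ℝ) + ‖c‖ ^ 2 := by
    have h1 : ∀ i : Fin k, W i * ‖y i - c‖ ^ 2
        = W i * ‖y i‖ ^ 2 - 2 * (W i * (inner ℝ (y i) c : ℝ)) + W i * ‖c‖ ^ 2 := fun i => by
      rw [norm_sub_sq_real]; ring
    simp_rw [h1]
    rw [Finset.sum_add_distrib, Finset.sum_sub_distrib, ← Finset.sum_mul, hWsum, one_mul,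
      ← Finset.mul_sum, ← hixc]
  have B1 : ∑ i, W i * ‖y i - c‖ ^ 2 ≤ 1 := by
    calc ∑ i, W i * ‖y i - c‖ ^ 2 ≤ ∑ i, W i * 1 := by
          refine Finset.sum_le_sum fun i _ => ?_
          have := hy i
          have h2 : ‖y i - c‖ ^ 2 ≤ 1 := by nlinarith [norm_nonneg (y i - c)]
          nlinarith [hW0 i]
      _ = 1 := by simp [hWsum]
  have B2 : ‖z - x‖ ^ 2 ≤ 1 := by nlinarith [norm_nonneg (z - x)]
  have hzxe : ‖z - x‖ ^ 2 = ‖z‖ ^ 2 - 2 * (inner ℝ z x : ℝ) + ‖x‖ ^ 2 := norm_sub_sq_real z x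
  have hxce : ‖x - c‖ ^ 2 = ‖x‖ ^ 2 - 2 * (inner ℝ x c : ℝ) + ‖c‖ ^ 2 := norm_sub_sq_real x c
  have B3 : (0 : ℝ) ≤ ‖x - c‖ ^ 2 := sq_nonneg _
  have key : ∑ i, W i * ‖z - y i‖ ^ 2 ≤ 2 := by linarith
  -- extract an index
  by_contra hcon
  push_neg at hcon
  have hgt : ∀ i, 2 < ‖z - y i‖ ^ 2 := by
    intro i
    have h := hcon i
    nlinarith [Real.sqrt_nonneg 2,
      norm_nonneg (z - y i), Real.sq_sqrt (by norm_num : (0:ℝ) ≤ 2)]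
  have hex : ∃ i, 0 < W i := by
    by_contra hall
    push_neg at hall
    have : ∑ i, W i = 0 := le_antisymm (Finset.sum_nonpos fun i _ => hall i)
      (Finset.sum_nonneg fun i _ => hW0 i)
    rw [hWsum] at this; norm_num at this
  obtain ⟨j, hj⟩ := hex
  have hlt : ∑ i, W i * 2 < ∑ i, W i * ‖z - y i‖ ^ 2 := by
    refine Finset.sum_lt_sum (fun i _ => ?_) ⟨j, Finset.mem_univ j, ?_⟩
    · exact mul_le_mul_of_nonneg_left (hgt i).le (hW0 i)
    · exact (mul_lt_mul_iff_right₀ hj).2 (hgt j)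
  rw [← Finset.sum_mul, hWsum, one_mul] at hlt
  linarith
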